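/- A Boolean algebra has at least 2^n elements if and only if it contains n pairwise-disjoint nonzero elements, i.e., elements x_1, ..., x_n all different from 0 such that x_i ∧ x_j = 0 for all i ≠ j. -/

import Mathlib

open Function

private lemma exists_inj_of_infinite {B : Type*} {s : Set B} (hs : s.Infinite) (k : ℕ) :
    ∃ g : Fin k → B, Injective g ∧ ∀ i, g i ∈ s := by
  haveI := hs.to_subtype
  let e := Infinite.natEmbedding s
  refine ⟨fun i => (e i.1 : B), ?_, fun i => (e i.1).2⟩
  intro i j h
  exact Fin.val_injective (e.injective (Subtype.coe_injective h))

private lemma exists_inj_of_card {B : Type*} {s : Set B} (hs : s.Finite) {k : ℕ}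
    (h : k ≤ Nat.card s) : ∃ g : Fin k → B, Injective g ∧ ∀ i, g i ∈ s := by
  haveI := hs.to_subtype
  let e := Finite.equivFin s
  refine ⟨fun i => (e.symm (Fin.castLE h i) : B), ?_, fun i => (e.symm (Fin.castLE h i)).2⟩
  intro i j hij
  have := e.symm.injective (Subtype.coe_injective hij)
  exact Fin.castLE_injective h this

/-- Key splitting step: from `2^(n+1)` elements below `b`, extract a nonzero `a ≤ b`
and `2^n` elements below `b \ a`. -/
private lemma split_step {B : Type*} [BooleanAlgebra B] (b : B) (n : ℕ)
    (h : ∃ f : Fin (2 ^ (n + 1)) → B, Injective f ∧ ∀ i, f i ≤ b) :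
    ∃ a, a ≠ ⊥ ∧ a ≤ b ∧ ∃ g : Fin (2 ^ n) → B, Injective g ∧ ∀ i, g i ≤ b \ a := by
  obtain ⟨f, hf, hfb⟩ := h
  have h2 : (2 : ℕ) ≤ 2 ^ (n + 1) := by
    calc (2:ℕ) = 2 ^ 1 := rfl
    _ ≤ 2 ^ (n+1) := Nat.pow_le_pow_right (by norm_num) (by omega)
  have hb : b ≠ ⊥ := by
    intro hbot
    have h0 : f ⟨0, by omega⟩ = f ⟨1, by omega⟩ := by
      have e0 := le_bot_iff.mp (hbot ▸ hfb ⟨0, by omega⟩)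
      have e1 := le_bot_iff.mp (hbot ▸ hfb ⟨1, by omega⟩)
      rw [e0, e1]
    have := hf h0
    simp [Fin.ext_iff] at this
  by_cases hS : (Set.Iic b).Infinite
  · -- infinite case
    obtain ⟨c, hc⟩ := (hS.diff ((Set.finite_singleton ⊥).insert b)).nonempty
    obtain ⟨hcb, hc2⟩ := hc
    have hcb : c ≤ b := hcb
    have hcne : c ≠ b := fun h => hc2 (by simp [h])
    have hc0 : c ≠ ⊥ := fun h => hc2 (by simp [h])
    by_cases h1 : (Set.Iic (b \ c)).Infinite
    · exact ⟨c, hc0, hcb, exists_inj_of_infinite h1 _⟩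
    · have h2' : (Set.Iic c).Infinite := by
        by_contra h2'
        rw [Set.not_infinite] at h1 h2'
        apply hS
        have hsub : Set.Iic b ⊆ (fun p : B × B => p.1 ⊔ p.2) '' (Set.Iic c ×ˢ Set.Iic (b \ c)) := by
          intro y hy
          exact ⟨(y ⊓ c, y \ c), ⟨inf_le_right, sdiff_le_sdiff_right hy⟩, sup_inf_sdiff y c⟩
        exact ((h2'.prod h1).image _).subset hsub
      refine ⟨b \ c, ?_, sdiff_le, ?_⟩
      · rw [Ne, sdiff_eq_bot_iff]
        exact fun h => hcne (le_antisymm hcb h)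
      · have hbc : b \ (b \ c) = c := sdiff_sdiff_eq_self hcb
        rw [hbc]
        exact exists_inj_of_infinite h2' _
  · -- finite case
    rw [Set.not_infinite] at hS
    -- find a minimal nonzero element ≤ b
    obtain ⟨a, ⟨ha0, hab⟩, hmin⟩ :=
      Set.Finite.exists_minimalFor id {y : B | y ≠ ⊥ ∧ y ≤ b}
        (hS.subset fun y hy => hy.2) ⟨b, hb, le_rfl⟩
    have hatom : ∀ y, y ≤ a → y = ⊥ ∨ y = a := by
      intro y hy
      by_cases hy0 : y = ⊥
      · exact Or.inl hy0
      · exact Or.inr (le_antisymm hy (hmin ⟨hy0, hy.trans hab⟩ hy))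
    -- counting
    haveI : Finite (Set.Iic b) := hS.to_subtype
    haveI : Finite (Set.Iic (b \ a)) := (hS.subset fun y hy => hy.trans sdiff_le).to_subtype
    haveI : Finite (({⊥, a} : Set B)) := ((Set.finite_singleton a).insert ⊥).to_subtype
    set Φ : Set.Iic b → ({⊥, a} : Set B) × Set.Iic (b \ a) :=
      fun y => (⟨(y : B) ⊓ a, by
        rcases hatom _ (inf_le_right (a := (y:B))) with h | h <;> simp [h]⟩,
        ⟨(y : B) \ a, sdiff_le_sdiff_right y.2⟩) with hΦdef
    have hΦ : Injective Φ := by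
      intro y z hyz
      rw [Prod.ext_iff, Subtype.ext_iff, Subtype.ext_iff] at hyz
      have e1 : (y : B) ⊓ a = (z : B) ⊓ a := hyz.1
      have e2 : (y : B) \ a = (z : B) \ a := hyz.2
      apply Subtype.ext
      calc (y : B) = (y : B) ⊓ a ⊔ (y : B) \ a := (sup_inf_sdiff _ _).symm
        _ = (z : B) ⊓ a ⊔ (z : B) \ a := by rw [e1, e2]
        _ = (z : B) := sup_inf_sdiff _ _
    have hle : 2 ^ (n + 1) ≤ Nat.card (Set.Iic b) := by
      have hinj : Injective (fun i : Fin (2 ^ (n + 1)) => (⟨f i, hfb i⟩ : Set.Iic b)) := by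
        intro i j h
        exact hf (Subtype.ext_iff.mp h)
      have := Nat.card_le_card_of_injective _ hinj
      simpa only [Nat.card_eq_fintype_card, Fintype.card_fin] using this
    have hcard : Nat.card (Set.Iic b) ≤ 2 * Nat.card (Set.Iic (b \ a)) := by
      have h1 := Nat.card_le_card_of_injective Φ hΦ
      rw [Nat.card_prod] at h1
      have h2 : Nat.card (({⊥, a} : Set B)) = 2 := by
        rw [Nat.card_coe_set_eq, Set.ncard_pair (Ne.symm ha0)]
      rwa [h2] at h1
    have hfinal : 2 ^ n ≤ Nat.card (Set.Iic (b \ a)) := by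
      have : 2 * 2 ^ n ≤ 2 * Nat.card (Set.Iic (b \ a)) := by
        calc 2 * 2 ^ n = 2 ^ (n + 1) := by ring
        _ ≤ _ := le_trans hle hcard
      omega
    obtain ⟨g, hg, hgm⟩ := exists_inj_of_card (hS.subset fun y hy => hy.trans sdiff_le) hfinal
    exact ⟨a, ha0, hab, g, hg, hgm⟩

private lemma key (n : ℕ) : ∀ {B : Type*} [BooleanAlgebra B] (b : B),
    (∃ f : Fin (2 ^ n) → B, Injective f ∧ ∀ i, f i ≤ b) →
    ∃ x : Fin n → B, (∀ i, x i ≠ ⊥) ∧ (∀ i, x i ≤ b) ∧ ∀ i j, i ≠ j → x i ⊓ x j = ⊥ := by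
  induction n with
  | zero =>
    intro B _ b _
    exact ⟨Fin.elim0, fun i => i.elim0, fun i => i.elim0, fun i => i.elim0⟩
  | succ n ih =>
    intro B _ b h
    obtain ⟨a, ha0, hab, g, hg, hgd⟩ := split_step b n h
    obtain ⟨x, hx0, hxb, hxd⟩ := ih (b \ a) ⟨g, hg, hgd⟩
    have hca : ∀ j, x j ≤ aᶜ := fun j =>
      (hxb j).trans (by rw [sdiff_eq]; exact inf_le_right)
    have hdisj : ∀ j, x j ⊓ a = ⊥ := fun j =>
      disjoint_iff.mp ((disjoint_compl_left (a := a)).mono_left (hca j))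
    refine ⟨Fin.cons a x, ?_, ?_, ?_⟩
    · intro i
      induction i using Fin.cases with
      | zero => simpa using ha0
      | succ j => simpa using hx0 j
    · intro i
      induction i using Fin.cases with
      | zero => simpa using hab
      | succ j => simpa using (hxb j).trans sdiff_le
    · intro i j hij
      induction i using Fin.cases with
      | zero =>
        induction j using Fin.cases with
        | zero => exact absurd rfl hij
        | succ j => simpa [inf_comm] using hdisj j
      | succ i =>
        induction j using Fin.cases with
        | zero => simpa using hdisj i
        | succ j =>
          have hne : i ≠ j := fun h => hij (by rw [h])
          simpa using hxd i j hne

theorem stmt_1 (B : Type*) [BooleanAlgebra B] (n : ℕ) (hn : 0 < n) :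
    (∃ f : Fin (2 ^ n) → B, Function.Injective f) ↔
      ∃ x : Fin n → B, (∀ i, x i ≠ ⊥) ∧ (∀ i j, i ≠ j → x i ⊓ x j = ⊥) := by
  constructor
  · rintro ⟨f, hf⟩
    obtain ⟨x, hx0, _, hxd⟩ := key n (⊤ : B) ⟨f, hf, fun i => le_top⟩
    exact ⟨x, hx0, hxd⟩
  · rintro ⟨x, hx0, hxd⟩
    have hsup : ∀ S T : Finset (Fin n), S.sup x = T.sup x → S ⊆ T := by
      intro S T h i hi
      by_contra hiT
      have h1 : x i ≤ T.sup x := h ▸ Finset.le_sup hi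
      have h2 : x i ⊓ T.sup x = ⊥ := by
        rw [Finset.sup_inf_distrib_left]
        exact (Finset.sup_eq_bot_iff _ _).mpr fun j hj => hxd i j fun h => hiT (h ▸ hj)
      have h3 : x i = ⊥ := by
        rw [← inf_eq_left.mpr h1, h2]
      exact hx0 i h3
    have e : Fin (2 ^ n) ≃ Finset (Fin n) :=
      (Fintype.equivFinOfCardEq (by simp)).symm
    refine ⟨fun m => (e m).sup x, ?_⟩
    intro m m' h
    apply e.injective
    exact Finset.Subset.antisymm (hsup _ _ h) (hsup _ _ h.symm)
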